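/- arXiv:0707.4007 — 2 statements merged into one kernel-verified Lean document; each statement's English description precedes it below -/
import Mathlib

section
/- For every n ≥ 2 and every choice of labels p_1,…,p_{n−1} ∈ {3, ∞}, the group G^3 = [p_1,…,p_{n−1}]^3 ≤ GL_n(ZMod 3) is isomorphic, as an abstract group, to the symmetric group S_{n+1} on n+1 letters; in particular its order is (n+1)!, independently of the allocation of the branch labels. -/
namespace Statement15

def gram (n : ℕ) (e : ℕ → ZMod 3) : Matrix (Fin n) (Fin n) (ZMod 3) :=
  fun i j =>
    if i = j then 1
    else if (j : ℕ) = (i : ℕ) + 1 then e (j : ℕ)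
    else if (i : ℕ) = (j : ℕ) + 1 then e (i : ℕ)
    else 0

def form (n : ℕ) (e : ℕ → ZMod 3) (x y : Fin n → ZMod 3) : ZMod 3 :=
  ∑ i, ∑ j, x i * gram n e i j * y j

/-- sign twist -/
def eps (e : ℕ → ZMod 3) (i : ℕ) : ZMod 3 := ∏ j ∈ Finset.range i, e (j + 1)

/-- extend a `Fin m`-vector by zero to `ℕ` -/
def ext {m : ℕ} (v : Fin m → ZMod 3) (j : ℕ) : ZMod 3 :=
  if h : j < m then v ⟨j, h⟩ else 0

/-- partial data: `F x j = ε_j x_j` (extended by zero) -/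
def Ff (n : ℕ) (e : ℕ → ZMod 3) (x : Fin n → ZMod 3) (j : ℕ) : ZMod 3 :=
  eps e j * ext x j

/-- the `j`-th coordinate of the image of `x` in `(ZMod 3)^{n+1}` -/
def Tf (n : ℕ) (e : ℕ → ZMod 3) (x : Fin n → ZMod 3) (j : ℕ) : ZMod 3 :=
  if j = 0 then Ff n e x 0 else Ff n e x j - Ff n e x (j - 1)

/-- transport of the permutation action back to `(ZMod 3)^n` -/
def Phi (n : ℕ) (e : ℕ → ZMod 3) (σ : Equiv.Perm (Fin (n + 1)))
    (x : Fin n → ZMod 3) : Fin n → ZMod 3 :=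
  fun i => eps e i *
    ∑ j ∈ Finset.range ((i : ℕ) + 1),
      ext (fun j' : Fin (n + 1) => Tf n e x ((σ⁻¹ j' : Fin (n + 1)) : ℕ)) j

lemma ext_lt {m : ℕ} (v : Fin m → ZMod 3) (j : ℕ) (h : j < m) :
    ext v j = v ⟨j, h⟩ := dif_pos h

lemma ext_ge {m : ℕ} (v : Fin m → ZMod 3) (j : ℕ) (h : m ≤ j) :
    ext v j = 0 := dif_neg (by omega)

lemma ext_coe {m : ℕ} (v : Fin m → ZMod 3) (j : Fin m) :
    ext v (j : ℕ) = v j := dif_pos j.isLt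


lemma eps_sq (n : ℕ) (e : ℕ → ZMod 3)
    (he : ∀ i : ℕ, 1 ≤ i → i ≤ n - 1 → e i = 1 ∨ e i = -1) :
    ∀ i, i ≤ n - 1 → eps e i * eps e i = 1 := by
  intro i
  induction i with
  | zero => intro _; simp [eps]
  | succ k ih =>
    intro hk
    have h1 := ih (by omega)
    have hp : eps e (k + 1) = eps e k * e (k + 1) := Finset.prod_range_succ _ _
    have hc : e (k + 1) * e (k + 1) = 1 := by
      rcases he (k + 1) (by omega) hk with h | h <;> rw [h] <;> decide
    calc eps e (k + 1) * eps e (k + 1)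
        = (eps e k * eps e k) * (e (k + 1) * e (k + 1)) := by rw [hp]; ring
      _ = 1 := by rw [h1, hc, one_mul]

lemma sum_Tf (n : ℕ) (e : ℕ → ZMod 3) (x : Fin n → ZMod 3) :
    ∀ i, ∑ j ∈ Finset.range (i + 1), Tf n e x j = Ff n e x i := by
  intro i
  induction i with
  | zero => simp [Tf]
  | succ k ih =>
    rw [Finset.sum_range_succ, ih]
    simp [Tf]

lemma sum_ext (m : ℕ) (v : Fin m → ZMod 3) :
    ∑ j ∈ Finset.range m, ext v j = ∑ j, v j := by
  rw [← Fin.sum_univ_eq_sum_range (fun j => ext v j) m]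
  exact Finset.sum_congr rfl fun j _ => ext_lt v j j.isLt

lemma Tf_S (n : ℕ) (e : ℕ → ZMod 3)
    (he : ∀ i : ℕ, 1 ≤ i → i ≤ n - 1 → e i = 1 ∨ e i = -1)
    (hn : 1 ≤ n) (v : Fin (n + 1) → ZMod 3) (hv : ∑ j, v j = 0) (j : ℕ) (hj : j ≤ n) :
    Tf n e (fun i : Fin n => eps e (i : ℕ) *
        ∑ k ∈ Finset.range ((i : ℕ) + 1), ext v k) j = ext v j := by
  set Sv : Fin n → ZMod 3 := fun i : Fin n => eps e (i : ℕ) *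
        ∑ k ∈ Finset.range ((i : ℕ) + 1), ext v k with hSv
  have hF : ∀ m : ℕ, m < n → Ff n e Sv m = ∑ k ∈ Finset.range (m + 1), ext v k := by
    intro m hm
    rw [Ff, ext_lt Sv m hm, hSv]
    dsimp only
    rw [← mul_assoc, eps_sq n e he m (by omega), one_mul]
  have hFn : ∀ m : ℕ, n ≤ m → Ff n e Sv m = 0 := by
    intro m hm; rw [Ff, ext_ge Sv m hm, mul_zero]
  have hvt : ∑ k ∈ Finset.range (n + 1), ext v k = 0 := by rw [sum_ext]; exact hv
  rcases Nat.eq_zero_or_pos j with h0 | hpos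
  · subst h0
    rw [Tf, if_pos rfl, hF 0 (by omega), Finset.sum_range_one]
  · rw [Tf, if_neg (by omega)]
    rcases Nat.lt_or_ge j n with hlt | hge
    · rw [hF j hlt, hF (j - 1) (by omega)]
      have : j - 1 + 1 = j := by omega
      rw [this, Finset.sum_range_succ]
      ring
    · have hj' : j = n := by omega
      rw [hj']
      rw [hFn n le_rfl, hF (n - 1) (by omega)]
      have h1 : n - 1 + 1 = n := by omega
      rw [h1]
      have h2 := Finset.sum_range_succ (fun k => ext v k) n
      rw [hvt] at h2
      -- h2 : 0 = ∑ k ∈ range n, ext v k + ext v n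
      linear_combination h2

lemma Phi_one (n : ℕ) (e : ℕ → ZMod 3)
    (he : ∀ i : ℕ, 1 ≤ i → i ≤ n - 1 → e i = 1 ∨ e i = -1)
    (x : Fin n → ZMod 3) : Phi n e 1 x = x := by
  funext i
  rw [Phi]
  have h1 : ∀ j ∈ Finset.range ((i : ℕ) + 1),
      ext (fun j' : Fin (n + 1) => Tf n e x (((1 : Equiv.Perm (Fin (n+1)))⁻¹ j' : Fin (n + 1)) : ℕ)) j
        = Tf n e x j := by
    intro j hj
    have hjn : j < n + 1 := by
      have := Finset.mem_range.mp hj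
      omega
    rw [ext_lt _ j hjn]
    rfl
  rw [Finset.sum_congr rfl h1, sum_Tf n e x i, Ff, ext_lt x _ i.isLt, ← mul_assoc,
    eps_sq n e he i (by omega), one_mul]

lemma Phi_mul (n : ℕ) (e : ℕ → ZMod 3)
    (he : ∀ i : ℕ, 1 ≤ i → i ≤ n - 1 → e i = 1 ∨ e i = -1) (hn : 1 ≤ n)
    (σ τ : Equiv.Perm (Fin (n + 1))) (x : Fin n → ZMod 3) :
    Phi n e (σ * τ) x = Phi n e σ (Phi n e τ x) := by
  funext i
  rw [Phi, Phi]
  congr 1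
  apply Finset.sum_congr rfl
  intro j hj
  have hjn : j < n + 1 := by
    have := Finset.mem_range.mp hj
    have := i.isLt
    omega
  rw [ext_lt _ j hjn, ext_lt _ j hjn]
  set v : Fin (n + 1) → ZMod 3 := fun j' : Fin (n + 1) => Tf n e x ((τ⁻¹ j' : Fin (n + 1)) : ℕ) with hv
  have hsum : ∑ j', v j' = 0 := by
    rw [hv]
    rw [Equiv.sum_comp τ⁻¹ (fun j' : Fin (n+1) => Tf n e x (j' : ℕ))]
    rw [Fin.sum_univ_eq_sum_range (fun j' => Tf n e x j') (n + 1), sum_Tf n e x n, Ff,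
      ext_ge x n le_rfl, mul_zero]
  have key : ∀ k : Fin (n + 1), Tf n e (Phi n e τ x) (k : ℕ) = v k := by
    intro k
    have := Tf_S n e he hn v hsum (k : ℕ) (by omega)
    rw [ext_lt v _ k.isLt] at this
    convert this using 2
    rfl
  rw [key]
  simp [hv, mul_inv_rev]

lemma Tf_add (n : ℕ) (e : ℕ → ZMod 3) (x y : Fin n → ZMod 3) (j : ℕ) :
    Tf n e (x + y) j = Tf n e x j + Tf n e y j := by
  have hext : ∀ k : ℕ, ext (x + y) k = ext x k + ext y k := by
    intro k
    unfold ext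
    split
    · rfl
    · rw [add_zero]
  unfold Tf Ff
  split <;> simp only [hext] <;> ring

lemma Tf_smul (n : ℕ) (e : ℕ → ZMod 3) (c : ZMod 3) (x : Fin n → ZMod 3) (j : ℕ) :
    Tf n e (c • x) j = c * Tf n e x j := by
  have hext : ∀ k : ℕ, ext (c • x) k = c * ext x k := by
    intro k
    unfold ext
    split
    · rfl
    · rw [mul_zero]
  unfold Tf Ff
  split <;> simp only [hext] <;> ring

lemma Phi_add (n : ℕ) (e : ℕ → ZMod 3) (σ : Equiv.Perm (Fin (n + 1)))
    (x y : Fin n → ZMod 3) : Phi n e σ (x + y) = Phi n e σ x + Phi n e σ y := by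
  funext i
  show Phi n e σ (x + y) i = Phi n e σ x i + Phi n e σ y i
  unfold Phi
  rw [← mul_add, ← Finset.sum_add_distrib]
  congr 1
  apply Finset.sum_congr rfl
  intro j hj
  have hjn : j < n + 1 := by
    have := Finset.mem_range.mp hj
    have := i.isLt
    omega
  rw [ext_lt _ j hjn, ext_lt _ j hjn, ext_lt _ j hjn]
  exact Tf_add n e x y _

lemma Phi_smul (n : ℕ) (e : ℕ → ZMod 3) (σ : Equiv.Perm (Fin (n + 1)))
    (c : ZMod 3) (x : Fin n → ZMod 3) : Phi n e σ (c • x) = c • Phi n e σ x := by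
  funext i
  show Phi n e σ (c • x) i = c * Phi n e σ x i
  unfold Phi
  rw [Finset.mul_sum, Finset.mul_sum, Finset.mul_sum]
  apply Finset.sum_congr rfl
  intro j hj
  have hjn : j < n + 1 := by
    have := Finset.mem_range.mp hj
    have := i.isLt
    omega
  rw [ext_lt _ j hjn, ext_lt _ j hjn, Tf_smul n e c x]
  ring

/-- The endomorphism given by `Phi`. -/
def PhiE (n : ℕ) (e : ℕ → ZMod 3) (σ : Equiv.Perm (Fin (n + 1))) :
    Module.End (ZMod 3) (Fin n → ZMod 3) where
  toFun := Phi n e σ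
  map_add' := Phi_add n e σ
  map_smul' := Phi_smul n e σ

lemma form_single (n : ℕ) (e : ℕ → ZMod 3) (x : Fin n → ZMod 3) (i : Fin n) :
    form n e x (Pi.single i 1) =
      x i + e ((i : ℕ) + 1) * ext x ((i : ℕ) + 1) +
        (if (i : ℕ) = 0 then 0 else e (i : ℕ) * ext x ((i : ℕ) - 1)) := by
  have h1 : form n e x (Pi.single i 1) = ∑ a, x a * gram n e a i := by
    unfold form
    apply Finset.sum_congr rfl
    intro a _
    rw [Finset.sum_eq_single i]
    · rw [Pi.single_eq_same, mul_one]
    · intro b _ hb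
      rw [Pi.single_eq_of_ne hb, mul_zero]
    · intro h; exact absurd (Finset.mem_univ i) h
  have h2 : ∀ a : Fin n, x a * gram n e a i =
      (if (a : ℕ) = (i : ℕ) then ext x (a : ℕ) else 0)
      + (if (a : ℕ) = (i : ℕ) + 1 then e ((i : ℕ) + 1) * ext x (a : ℕ) else 0)
      + (if (a : ℕ) + 1 = (i : ℕ) then e (i : ℕ) * ext x (a : ℕ) else 0) := by
    intro a
    rw [ext_coe x a]
    by_cases c1 : (a : ℕ) = (i : ℕ)
    · have hai : a = i := Fin.ext c1
      subst hai
      simp [gram]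
    · have hne : ¬ a = i := fun h => c1 (congrArg Fin.val h)
      by_cases c2 : (i : ℕ) = (a : ℕ) + 1
      · have d2 : ¬ ((a : ℕ) = (i : ℕ) + 1) := by omega
        have d3 : (a : ℕ) + 1 = (i : ℕ) := by omega
        simp only [gram, if_neg hne, if_pos c2, if_neg c1, if_neg d2, if_pos d3]
        ring
      · by_cases c3 : (a : ℕ) = (i : ℕ) + 1
        · have d3 : ¬ ((a : ℕ) + 1 = (i : ℕ)) := by omega
          simp only [gram, if_neg hne, if_neg c2, if_pos c3, if_neg c1, if_neg d3]
          conv_lhs => rw [c3]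
          ring
        · have d3 : ¬ ((a : ℕ) + 1 = (i : ℕ)) := by omega
          simp only [gram, if_neg hne, if_neg c2, if_neg c3, if_neg c1, if_neg d3]
          ring
  rw [h1, Finset.sum_congr rfl (fun a _ => h2 a)]
  rw [Finset.sum_add_distrib, Finset.sum_add_distrib]
  have e1 : ∑ a : Fin n, (if (a : ℕ) = (i : ℕ) then ext x (a : ℕ) else 0) = x i := by
    rw [Fin.sum_univ_eq_sum_range (fun k => if k = (i : ℕ) then ext x k else 0) n,
      Finset.sum_ite_eq' (Finset.range n) (i : ℕ) (ext x),
      if_pos (Finset.mem_range.mpr i.isLt), ext_coe x i]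
  have e2 : ∑ a : Fin n, (if (a : ℕ) = (i : ℕ) + 1 then e ((i : ℕ) + 1) * ext x (a : ℕ) else 0)
      = e ((i : ℕ) + 1) * ext x ((i : ℕ) + 1) := by
    rw [Fin.sum_univ_eq_sum_range (fun k => if k = (i : ℕ) + 1 then e ((i : ℕ) + 1) * ext x k else 0) n,
      Finset.sum_ite_eq' (Finset.range n) ((i : ℕ) + 1) (fun k => e ((i : ℕ) + 1) * ext x k)]
    by_cases hin : (i : ℕ) + 1 < n
    · rw [if_pos (Finset.mem_range.mpr hin)]
    · rw [if_neg (fun hq => hin (Finset.mem_range.mp hq)), ext_ge x _ (by omega), mul_zero]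
  have e3 : ∑ a : Fin n, (if (a : ℕ) + 1 = (i : ℕ) then e (i : ℕ) * ext x (a : ℕ) else 0)
      = (if (i : ℕ) = 0 then 0 else e (i : ℕ) * ext x ((i : ℕ) - 1)) := by
    rw [Fin.sum_univ_eq_sum_range (fun k => if k + 1 = (i : ℕ) then e (i : ℕ) * ext x k else 0) n]
    by_cases hi0 : (i : ℕ) = 0
    · rw [if_pos hi0]
      apply Finset.sum_eq_zero
      intro k _
      rw [if_neg (by omega)]
    · rw [if_neg hi0]
      have hcong : ∀ k ∈ Finset.range n,
          (if k + 1 = (i : ℕ) then e (i : ℕ) * ext x k else 0)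
          = (if k = (i : ℕ) - 1 then e (i : ℕ) * ext x k else 0) := by
        intro k _
        congr 1
        simp only [eq_iff_iff]
        omega
      rw [Finset.sum_congr rfl hcong,
        Finset.sum_ite_eq' (Finset.range n) ((i : ℕ) - 1) (fun k => e (i : ℕ) * ext x k),
        if_pos (Finset.mem_range.mpr (by have := i.isLt; omega))]
  rw [e1, e2, e3]

lemma sum_swap_eq (f : ℕ → ZMod 3) (a m : ℕ) (h : a + 1 ≤ m) :
    ∑ j ∈ Finset.range (m + 1), (if j = a then f (a + 1) else if j = a + 1 then f a else f j)
      = ∑ j ∈ Finset.range (m + 1), f j := by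
  have hfun : ∀ j, (if j = a then f (a + 1) else if j = a + 1 then f a else f j)
      = f (Equiv.swap a (a + 1) j) := by
    intro j
    rw [Equiv.swap_apply_def]
    split_ifs <;> rfl
  refine (Finset.sum_congr rfl (fun j _ => hfun j)).trans ?_
  apply Finset.sum_equiv (Equiv.swap a (a + 1))
  · intro j
    simp only [Finset.mem_range]
    rcases eq_or_ne j a with rfl | h1
    · rw [Equiv.swap_apply_left]; omega
    rcases eq_or_ne j (a + 1) with rfl | h2
    · rw [Equiv.swap_apply_right]; omega
    · rw [Equiv.swap_apply_of_ne_of_ne h1 h2]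
  · intro j _
    rfl

lemma phi_swap (n : ℕ) (e : ℕ → ZMod 3)
    (he : ∀ i : ℕ, 1 ≤ i → i ≤ n - 1 → e i = 1 ∨ e i = -1)
    (i : Fin n) (x : Fin n → ZMod 3) (k : Fin n) :
    Phi n e (Equiv.swap (Fin.castSucc i) (Fin.succ i)) x k
      = x k + form n e x (Pi.single i 1) * (if k = i then 1 else 0) := by
  have h3 : (3 : ZMod 3) = 0 := by decide
  set σ := Equiv.swap (Fin.castSucc i) (Fin.succ i) with hσ
  have hsummand : ∀ j : ℕ, j < n + 1 →
      ext (fun j' : Fin (n + 1) => Tf n e x ((σ⁻¹ j' : Fin (n + 1)) : ℕ)) j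
        = (if j = (i : ℕ) then Tf n e x ((i : ℕ) + 1)
           else if j = (i : ℕ) + 1 then Tf n e x (i : ℕ) else Tf n e x j) := by
    intro j hj
    rw [ext_lt _ j hj]
    have hinv : σ⁻¹ = σ := by rw [hσ]; exact Equiv.swap_inv _ _
    rw [hinv]
    rcases eq_or_ne (⟨j, hj⟩ : Fin (n + 1)) (Fin.castSucc i) with hq | h1
    · have hji : j = (i : ℕ) := congrArg Fin.val hq
      rw [hq, hσ, Equiv.swap_apply_left, if_pos hji]
      rfl
    · rcases eq_or_ne (⟨j, hj⟩ : Fin (n + 1)) (Fin.succ i) with hq2 | h2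
      · have hji : j = (i : ℕ) + 1 := congrArg Fin.val hq2
        rw [hq2, hσ, Equiv.swap_apply_right, if_neg (by omega), if_pos hji]
        rfl
      · have hji : ¬ j = (i : ℕ) := fun h => h1 (Fin.ext h)
        have hji2 : ¬ j = (i : ℕ) + 1 := fun h => h2 (Fin.ext h)
        rw [hσ, Equiv.swap_apply_of_ne_of_ne h1 h2, if_neg hji, if_neg hji2]
  rw [Phi]
  rw [Finset.sum_congr rfl (fun j hj => hsummand j
    (by have := Finset.mem_range.mp hj; have := k.isLt; omega))]
  have hii := eps_sq n e he (k : ℕ) (by have := k.isLt; omega)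
  rcases lt_trichotomy (k : ℕ) (i : ℕ) with hlt | heq | hgt
  · have hcong : ∀ j ∈ Finset.range ((k : ℕ) + 1),
        (if j = (i : ℕ) then Tf n e x ((i : ℕ) + 1)
         else if j = (i : ℕ) + 1 then Tf n e x (i : ℕ) else Tf n e x j) = Tf n e x j := by
      intro j hj
      have := Finset.mem_range.mp hj
      rw [if_neg (by omega), if_neg (by omega)]
    rw [Finset.sum_congr rfl hcong, sum_Tf, Ff, ← mul_assoc, hii, one_mul, ext_coe x k,
      if_neg (fun h => by have := congrArg Fin.val h; omega), mul_zero, add_zero]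
  · have hk : k = i := Fin.ext heq
    subst hk
    rw [Finset.sum_range_succ]
    have hcong : ∀ j ∈ Finset.range (k : ℕ),
        (if j = (k : ℕ) then Tf n e x ((k : ℕ) + 1)
         else if j = (k : ℕ) + 1 then Tf n e x (k : ℕ) else Tf n e x j) = Tf n e x j := by
      intro j hj
      have := Finset.mem_range.mp hj
      rw [if_neg (by omega), if_neg (by omega)]
    rw [Finset.sum_congr rfl hcong, if_pos rfl]
    rw [form_single, if_pos rfl, mul_one]
    have hB : eps e ((k : ℕ) + 1) = eps e (k : ℕ) * e ((k : ℕ) + 1) :=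
      Finset.prod_range_succ _ _
    have f2 : eps e (k : ℕ) * eps e ((k : ℕ) + 1) = e ((k : ℕ) + 1) := by
      rw [hB]
      linear_combination e ((k : ℕ) + 1) * hii
    have hTf1 : Tf n e x ((k : ℕ) + 1)
        = eps e ((k : ℕ) + 1) * ext x ((k : ℕ) + 1) - eps e (k : ℕ) * ext x (k : ℕ) := by
      rw [Tf, if_neg (by omega)]
      simp [Ff]
    rw [hTf1, ext_coe x k]
    by_cases h0 : (k : ℕ) = 0
    · rw [h0] at hii f2 ⊢
      rw [Finset.sum_range_zero, if_pos rfl]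
      linear_combination ext x (0 + 1) * f2 - x k * hii - x k * h3
    · rw [if_neg h0]
      have h9 : (k : ℕ) = ((k : ℕ) - 1) + 1 := by omega
      have hsum := sum_Tf n e x ((k : ℕ) - 1)
      rw [← h9] at hsum
      rw [hsum]
      have hA : eps e ((k : ℕ) - 1 + 1) = eps e ((k : ℕ) - 1) * e ((k : ℕ) - 1 + 1) :=
        Finset.prod_range_succ _ _
      rw [← h9] at hA
      have hE := eps_sq n e he ((k : ℕ) - 1) (by have := k.isLt; omega)
      have f1 : eps e (k : ℕ) * eps e ((k : ℕ) - 1) = e (k : ℕ) := by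
        rw [hA]
        linear_combination e (k : ℕ) * hE
      rw [Ff]
      linear_combination ext x ((k : ℕ) - 1) * f1 + ext x ((k : ℕ) + 1) * f2
        - x k * hii - x k * h3
  · rw [sum_swap_eq (Tf n e x) (i : ℕ) (k : ℕ) (by omega), sum_Tf, Ff, ← mul_assoc, hii,
      one_mul, ext_coe x k,
      if_neg (fun h => by have := congrArg Fin.val h; omega), mul_zero, add_zero]

lemma Tf_single (n : ℕ) (e : ℕ → ZMod 3)
    (he : ∀ i : ℕ, 1 ≤ i → i ≤ n - 1 → e i = 1 ∨ e i = -1) (i : Fin n) (j : ℕ) :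
    Tf n e (Pi.single i (eps e (i : ℕ))) j
      = (if j = (i : ℕ) then 1 else 0) - (if j = (i : ℕ) + 1 then 1 else 0) := by
  have hii := eps_sq n e he (i : ℕ) (by have := i.isLt; omega)
  have hF : ∀ m : ℕ, Ff n e (Pi.single i (eps e (i : ℕ))) m
      = if m = (i : ℕ) then 1 else 0 := by
    intro m
    rw [Ff]
    by_cases hm : m < n
    · rw [ext_lt _ m hm]
      by_cases hmi : m = (i : ℕ)
      · have hq : (⟨m, hm⟩ : Fin n) = i := Fin.ext hmi
        rw [hq, Pi.single_eq_same, if_pos hmi, hmi, hii]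
      · have hq : (⟨m, hm⟩ : Fin n) ≠ i := fun h => hmi (congrArg Fin.val h)
        rw [Pi.single_eq_of_ne hq, mul_zero, if_neg hmi]
    · rw [ext_ge _ m (by omega), mul_zero, if_neg (by have := i.isLt; omega)]
  rw [Tf]
  by_cases hj : j = 0
  · subst hj
    rw [if_pos rfl, hF 0,
      show (if (0 : ℕ) = (i : ℕ) + 1 then (1 : ZMod 3) else 0) = 0 from if_neg (by omega),
      sub_zero]
  · rw [if_neg hj, hF, hF]
    have hiff : (j - 1 = (i : ℕ)) = (j = (i : ℕ) + 1) := by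
      simp only [eq_iff_iff]; omega
    simp only [hiff]

lemma perm_eq_one (n : ℕ) (e : ℕ → ZMod 3)
    (he : ∀ i : ℕ, 1 ≤ i → i ≤ n - 1 → e i = 1 ∨ e i = -1) (hn : 1 ≤ n)
    (σ : Equiv.Perm (Fin (n + 1)))
    (hfix : ∀ x : Fin n → ZMod 3, Phi n e σ x = x) : σ = 1 := by
  have hT : ∀ (x : Fin n → ZMod 3) (j : Fin (n + 1)),
      Tf n e x ((σ⁻¹ j : Fin (n + 1)) : ℕ) = Tf n e x (j : ℕ) := by
    intro x j
    set v : Fin (n + 1) → ZMod 3 :=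
      fun j' : Fin (n + 1) => Tf n e x ((σ⁻¹ j' : Fin (n + 1)) : ℕ) with hv
    have hsum : ∑ j', v j' = 0 := by
      rw [hv]
      rw [Equiv.sum_comp σ⁻¹ (fun j' : Fin (n + 1) => Tf n e x (j' : ℕ))]
      rw [Fin.sum_univ_eq_sum_range (fun j' => Tf n e x j') (n + 1), sum_Tf n e x n, Ff,
        ext_ge x n le_rfl, mul_zero]
    have h1 := Tf_S n e he hn v hsum (j : ℕ) (by omega)
    rw [ext_lt v _ j.isLt] at h1
    have h2 : (fun i : Fin n => eps e (i : ℕ) *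
        ∑ k ∈ Finset.range ((i : ℕ) + 1), ext v k) = x := hfix x
    rw [h2] at h1
    exact h1.symm
  have hfix2 : ∀ i : Fin n, σ⁻¹ (Fin.castSucc i) = Fin.castSucc i := by
    intro i
    have h := hT (Pi.single i (eps e (i : ℕ))) (Fin.castSucc i)
    rw [Tf_single n e he, Tf_single n e he] at h
    have hc : ((Fin.castSucc i : Fin (n + 1)) : ℕ) = (i : ℕ) := rfl
    have hrhs : (if ((Fin.castSucc i : Fin (n + 1)) : ℕ) = (i : ℕ) then (1 : ZMod 3) else 0)
        - (if ((Fin.castSucc i : Fin (n + 1)) : ℕ) = (i : ℕ) + 1 then (1 : ZMod 3) else 0)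
        = 1 := by
      rw [if_pos hc, if_neg (by rw [hc]; omega), sub_zero]
    rw [hrhs] at h
    by_cases h1 : ((σ⁻¹ (Fin.castSucc i) : Fin (n + 1)) : ℕ) = (i : ℕ)
    · exact Fin.ext (h1.trans hc.symm)
    · exfalso
      rw [if_neg h1] at h
      by_cases h2 : ((σ⁻¹ (Fin.castSucc i) : Fin (n + 1)) : ℕ) = (i : ℕ) + 1
      · rw [if_pos h2] at h
        exact absurd h (by decide)
      · rw [if_neg h2] at h
        exact absurd h (by decide)
  have hlast : σ⁻¹ (Fin.last n) = Fin.last n := by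
    by_contra hne
    obtain ⟨i, hi⟩ := Fin.exists_castSucc_eq.mpr hne
    have h5 : σ⁻¹ (Fin.last n) = σ⁻¹ (Fin.castSucc i) := by rw [hfix2 i, hi]
    have h6 := σ⁻¹.injective h5
    exact (Fin.castSucc_lt_last i).ne' h6
  have hinv : σ⁻¹ = 1 := by
    apply Equiv.ext
    intro j
    induction j using Fin.lastCases with
    | last => exact hlast
    | cast i => exact hfix2 i
  exact inv_eq_one.mp hinv

/-- for every `n ≥ 2` and every allocation of the branch labels
`p_i ∈ {3, ∞}`, the group `G³ = [p₁, …, p_{n−1}]³` is isomorphic to the symmetric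
group `S_{n+1}`; in particular its order is `(n+1)!`. -/
theorem statement15 (n : ℕ) (hn : 2 ≤ n) (e : ℕ → ZMod 3)
    (he : ∀ i : ℕ, 1 ≤ i → i ≤ n - 1 → e i = 1 ∨ e i = -1)
    (r : Fin n → (Module.End (ZMod 3) (Fin n → ZMod 3))ˣ)
    (hr : ∀ i x, (r i).1 x =
      x - (2 * form n e x (Pi.single i 1)) • (Pi.single i 1 : Fin n → ZMod 3)) :
    Nonempty (Subgroup.closure (Set.range r) ≃* Equiv.Perm (Fin (n + 1))) ∧
    Nat.card (Subgroup.closure (Set.range r)) = Nat.factorial (n + 1) := by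
  classical
  have h3 : (3 : ZMod 3) = 0 := by decide
  have hn1 : 1 ≤ n := by omega
  have hone : PhiE n e 1 = 1 := LinearMap.ext fun x => Phi_one n e he x
  have hmul : ∀ σ τ, PhiE n e (σ * τ) = PhiE n e σ * PhiE n e τ :=
    fun σ τ => LinearMap.ext fun x => Phi_mul n e he hn1 σ τ x
  let PhiL : Equiv.Perm (Fin (n + 1)) →* (Module.End (ZMod 3) (Fin n → ZMod 3))ˣ :=
    { toFun := fun σ => ⟨PhiE n e σ, PhiE n e σ⁻¹,
        by rw [← hmul, mul_inv_cancel, hone],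
        by rw [← hmul, inv_mul_cancel, hone]⟩,
      map_one' := Units.ext hone,
      map_mul' := fun σ τ => Units.ext (hmul σ τ) }
  have hinj : Function.Injective PhiL := by
    rw [injective_iff_map_eq_one]
    intro σ hσ
    apply perm_eq_one n e he hn1 σ
    intro x
    have hval : PhiE n e σ = 1 := congrArg Units.val hσ
    exact LinearMap.congr_fun hval x
  have hswap : ∀ i : Fin n, PhiL (Equiv.swap (Fin.castSucc i) (Fin.succ i)) = r i := by
    intro i
    apply Units.ext
    apply LinearMap.ext
    intro x
    show Phi n e (Equiv.swap (Fin.castSucc i) (Fin.succ i)) x = (r i).1 x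
    rw [hr i x]
    funext k
    rw [phi_swap n e he i x k]
    simp only [Pi.sub_apply, Pi.smul_apply, smul_eq_mul, Pi.single_apply]
    split_ifs with h
    · linear_combination form n e x (Pi.single i 1) * h3
    · ring
  have hgen : Subgroup.closure (Set.range r) = PhiL.range := by
    have h1 : Set.range r
        = ⇑PhiL '' Set.range (fun i : Fin n => Equiv.swap (Fin.castSucc i) (Fin.succ i)) := by
      ext u
      constructor
      · rintro ⟨i, rfl⟩
        exact ⟨_, ⟨i, rfl⟩, hswap i⟩
      · rintro ⟨σ, ⟨i, rfl⟩, rfl⟩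
        exact ⟨i, (hswap i).symm⟩
    have h2 : Subgroup.closure
        (Set.range (fun i : Fin n => Equiv.swap (Fin.castSucc i) (Fin.succ i))) = ⊤ := by
      rw [eq_top_iff]
      intro σ _
      have hσ : σ ∈ Submonoid.closure
          (Set.range fun i : Fin n => Equiv.swap (Fin.castSucc i) (Fin.succ i)) := by
        rw [Equiv.Perm.mclosure_swap_castSucc_succ]
        trivial
      exact Submonoid.closure_le.mpr (fun y hy => Subgroup.subset_closure hy) hσ
    rw [h1, ← MonoidHom.map_closure, h2, ← MonoidHom.range_eq_map]
  have equiv1 : (Subgroup.closure (Set.range r)) ≃* PhiL.range := MulEquiv.subgroupCongr hgen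
  have equiv2 : Equiv.Perm (Fin (n + 1)) ≃* PhiL.range := MonoidHom.ofInjective hinj
  refine ⟨⟨equiv1.trans equiv2.symm⟩, ?_⟩
  rw [Nat.card_congr (equiv1.trans equiv2.symm).toEquiv, Nat.card_eq_fintype_card,
    Fintype.card_perm, Fintype.card_fin]

end Statement15
end

section
/- For every odd prime p, the negative of the identity map on V = (ZMod p)^5 does not lie in the product set G_4^p · G_0^p = { gh : g ∈ ⟨r_0, r_1, r_2, r_3⟩, h ∈ ⟨r_1, r_2, r_3, r_4⟩ }; equivalently, {±id} ∩ G_4^p G_0^p = {id}. -/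
/- Setup: the reduction mod an odd prime `p` of the rank-5 Coxeter group `[4,3,4,3]`. -/

namespace Statement17

/-- The Gram matrix of the basic system for `[4,3,4,3]` with node labels `(2,1,1,2,2)`,
reduced mod `p`. -/
def gram (p : ℕ) : Matrix (Fin 5) (Fin 5) (ZMod p) :=
  !![2, -1, 0, 0, 0;
     -1, 1, -(2⁻¹ : ZMod p), 0, 0;
     0, -(2⁻¹ : ZMod p), 1, -1, 0;
     0, 0, -1, 2, -1;
     0, 0, 0, -1, 2]

/-- The corresponding symmetric bilinear form `x·y` on `V = (ZMod p)^5`. -/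
def form (p : ℕ) (x y : Fin 5 → ZMod p) : ZMod p :=
  ∑ i, ∑ j, x i * gram p i j * y j

/-- The general linear group of `V`. -/
abbrev GLV (p : ℕ) := (Module.End (ZMod p) (Fin 5 → ZMod p))ˣ

/-- `r i` is the generating reflection `r_i : x ↦ x − 2((x·b_i)/(b_i·b_i)) b_i`. -/
def ReflHyp (p : ℕ) (r : Fin 5 → GLV p) : Prop :=
  ∀ i x, (r i).1 x =
    x - (2 * form p x (Pi.single i 1) *
      (form p (Pi.single i 1) (Pi.single i 1))⁻¹) •
      (Pi.single i 1 : Fin 5 → ZMod p)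

/-- The intersection property (string C-group condition). -/
def IsStringC (p : ℕ) (r : Fin 5 → GLV p) : Prop :=
  ∀ I J : Set (Fin 5),
    Subgroup.closure (r '' I) ⊓ Subgroup.closure (r '' J) = Subgroup.closure (r '' (I ∩ J))

/-- `O₁(V)`: the subgroup generated by all reflections `r_a` with `a·a` a nonzero square. -/
def O1 (p : ℕ) : Subgroup (GLV p) :=
  Subgroup.closure {g | ∃ a : Fin 5 → ZMod p,
    (∃ t : ZMod p, t ≠ 0 ∧ form p a a = t ^ 2) ∧
    ∀ x, g.1 x = x - (2 * form p x a * (form p a a)⁻¹) • a}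

/-- The full orthogonal group `O(V)` of the form, as a subgroup of `GL(V)`. -/
def OV (p : ℕ) : Subgroup (GLV p) where
  carrier := {g | ∀ x y, form p (g.1 x) (g.1 y) = form p x y}
  one_mem' := by intro x y; simp
  mul_mem' := by
    intro a b ha hb x y
    simpa [Units.val_mul] using (ha (b.1 x) (b.1 y)).trans (hb x y)
  inv_mem' := by
    intro a ha x y
    have key : ∀ z, a.1 ((a⁻¹ : GLV p).1 z) = z := by
      intro z
      rw [← Module.End.mul_apply, ← Units.val_mul, mul_inv_cancel, Units.val_one,
        Module.End.one_apply]
    have h := ha ((a⁻¹ : GLV p).1 x) ((a⁻¹ : GLV p).1 y)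
    rw [key, key] at h
    exact h.symm

variable (p : ℕ)

private lemma form_sub_smul (x a y : Fin 5 → ZMod p) (s : ZMod p) :
    form p (x - s • a) y = form p x y - s * form p a y := by
  simp only [form, Fin.sum_univ_five, Pi.sub_apply, Pi.smul_apply, smul_eq_mul]
  ring

private lemma form_neg (x y : Fin 5 → ZMod p) : form p (-x) y = - form p x y := by
  simp only [form, Fin.sum_univ_five, Pi.neg_apply]
  ring

private def vv : Fin 5 → ZMod p := ![1,4,6,4,2]
private def ww : Fin 5 → ZMod p := ![1,2,2,1,0]

private lemma single_eq : ∀ i : Fin 5, (Pi.single i (1:ZMod p)) =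
    ![![1,0,0,0,0], ![0,1,0,0,0], ![0,0,1,0,0], ![0,0,0,1,0], ![0,0,0,0,1]] i := by
  intro i; fin_cases i <;> (ext j; fin_cases j <;> simp [Matrix.vecHead, Matrix.vecTail])


/-- for every odd prime `p`, the map `−id` on `V = (ZMod p)^5` does not lie
in the product set `G₄ᵖ ⬝ G₀ᵖ`, where `G₄ᵖ = ⟨r₀, r₁, r₂, r₃⟩` and `G₀ᵖ = ⟨r₁, r₂, r₃, r₄⟩`;
equivalently `{±id} ∩ G₄ᵖ G₀ᵖ = {id}`. -/
theorem statement17 (p : ℕ) (hp : p.Prime) (hodd : p ≠ 2)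
    (r : Fin 5 → GLV p) (hr : ReflHyp p r) :
    ∀ g ∈ Subgroup.closure (r '' {i : Fin 5 | i ≠ 4}),
      ∀ h ∈ Subgroup.closure (r '' {i : Fin 5 | i ≠ 0}),
        g * h ≠ (-1 : GLV p) := by
  haveI := Fact.mk hp
  have h2 : (2 : ZMod p) ≠ 0 := by
    intro hc
    have hc2 : ((2:ℕ) : ZMod p) = 0 := by exact_mod_cast hc
    have hdvd := (ZMod.natCast_eq_zero_iff 2 p).mp hc2
    exact hodd ((Nat.prime_dvd_prime_iff_eq hp Nat.prime_two).mp hdvd)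
  intro g hg h hh heq
  -- form of basis vectors against ww vanishes for i ≠ 4
  have hw : ∀ i : Fin 5, i ≠ 4 → form p (Pi.single i 1) (ww p) = 0 := by
    intro i hi
    rw [single_eq]
    fin_cases i <;> first
    | exact absurd rfl hi
    | (simp only [form, gram, ww, Fin.sum_univ_five, Matrix.cons_val', Matrix.cons_val_zero,
        Matrix.cons_val_one, Matrix.head_cons, Matrix.empty_val', Matrix.cons_val_fin_one,
        Matrix.head_fin_const, Matrix.of_apply, Matrix.cons_val_two, Matrix.cons_val_three,
        Matrix.cons_val_four, Matrix.tail_cons, Fin.zero_eta, Fin.mk_one, Fin.reduceFinMk,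
        Matrix.cons_val]
       field_simp
       try ring)
  have hv : ∀ i : Fin 5, i ≠ 0 → form p (vv p) (Pi.single i 1) = 0 := by
    intro i hi
    rw [single_eq]
    fin_cases i <;> first
    | exact absurd rfl hi
    | (simp only [form, gram, vv, Fin.sum_univ_five, Matrix.cons_val', Matrix.cons_val_zero,
        Matrix.cons_val_one, Matrix.head_cons, Matrix.empty_val', Matrix.cons_val_fin_one,
        Matrix.head_fin_const, Matrix.of_apply, Matrix.cons_val_two, Matrix.cons_val_three,
        Matrix.cons_val_four, Matrix.tail_cons, Fin.zero_eta, Fin.mk_one, Fin.reduceFinMk,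
        Matrix.cons_val]
       field_simp
       try ring)
  have hvw : form p (vv p) (ww p) = -2 := by
    simp only [form, gram, vv, ww, Fin.sum_univ_five, Matrix.cons_val', Matrix.cons_val_zero,
        Matrix.cons_val_one, Matrix.head_cons, Matrix.empty_val', Matrix.cons_val_fin_one,
        Matrix.head_fin_const, Matrix.of_apply, Matrix.cons_val_two, Matrix.cons_val_three,
        Matrix.cons_val_four, Matrix.tail_cons]
    field_simp
    ring
  -- subgroup of maps preserving φ = form · ww
  let Hw : Subgroup (GLV p) :=
    { carrier := {u | ∀ x, form p (u.1 x) (ww p) = form p x (ww p)}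
      one_mem' := by intro x; simp
      mul_mem' := by
        intro a b ha hb x
        simpa [Units.val_mul] using (ha (b.1 x)).trans (hb x)
      inv_mem' := by
        intro a ha x
        have key : a.1 ((a⁻¹ : GLV p).1 x) = x := by
          rw [← Module.End.mul_apply, ← Units.val_mul, mul_inv_cancel, Units.val_one,
            Module.End.one_apply]
        have := ha ((a⁻¹ : GLV p).1 x)
        rw [key] at this
        exact this.symm }
  let Hv : Subgroup (GLV p) :=
    { carrier := {u | u.1 (vv p) = vv p}
      one_mem' := by simp
      mul_mem' := by
        intro a b ha hb
        simp only [Set.mem_setOf_eq, Units.val_mul, Module.End.mul_apply] at *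
        rw [hb, ha]
      inv_mem' := by
        intro a ha
        simp only [Set.mem_setOf_eq] at *
        have key : (a⁻¹ : GLV p).1 (a.1 (vv p)) = (a⁻¹ : GLV p).1 (vv p) := by rw [ha]
        rwa [← Module.End.mul_apply, ← Units.val_mul, inv_mul_cancel, Units.val_one,
          Module.End.one_apply, eq_comm] at key }
  have hgH : g ∈ Hw := by
    refine Subgroup.closure_le Hw |>.mpr ?_ hg
    rintro - ⟨i, hi, rfl⟩ x
    rw [hr i x, form_sub_smul, hw i hi, mul_zero, sub_zero]
  have hhH : h ∈ Hv := by
    refine Subgroup.closure_le Hv |>.mpr ?_ hh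
    rintro - ⟨i, hi, rfl⟩
    show (r i).1 (vv p) = vv p
    rw [hr i, hv i hi]
    simp
  -- combine
  have hval : (g * h).1 (vv p) = -(vv p) := by
    rw [heq]
    simp [Units.val_neg]
  have hgv : g.1 (vv p) = -(vv p) := by
    have : g.1 (h.1 (vv p)) = -(vv p) := by
      simpa [Units.val_mul, Module.End.mul_apply] using hval
    rwa [hhH] at this
  have := hgH (vv p)
  rw [hgv, form_neg, hvw] at this
  have h4 : (2:ZMod p) * 2 = 0 := by linear_combination this
  exact h2 (by rcases mul_eq_zero.mp h4 with h | h <;> exact h)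
end Statement17
end
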